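/- Let G be the whiskered triangle W(K_3) (triangle with vertices x1,x2,x3 and pendant vertices y1,y2,y3 attached to them respectively), with edge ideal I(G) ⊆ S = K[x1,x2,x3,y1,y2,y3]. Then depth_S I(G)^2 = 1 and α₂(G) = 3, so depth_S I(G)^2 = α₂(G) − 2, showing the bound depth I(G)^2 ≥ α₂(G) − 2 is sharp. -/

import Mathlib

open MvPolynomial

/-- The closed neighborhood of a vertex. -/
def closedNbhd {V : Type} (G : SimpleGraph V) (x : V) : Set V :=
  insert x (G.neighborSet x)

/-- A finite set of vertices is a star packing if the closed neighborhoods of its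
elements (the vertex sets of the corresponding stars) are pairwise disjoint. -/
def IsStarPacking {V : Type} (G : SimpleGraph V) (s : Finset V) : Prop :=
  (s : Set V).Pairwise fun x y => Disjoint (closedNbhd G x) (closedNbhd G y)

/-- The star packing number `α₂(G)`: the maximum size of a star packing. -/
noncomputable def starPackingNumber {V : Type} (G : SimpleGraph V) : ℕ :=
  sSup {n | ∃ s : Finset V, IsStarPacking G s ∧ s.card = n}

/-- The whiskered triangle `W(K₃)`: a triangle on vertices `0, 1, 2` with pendant
vertices `3, 4, 5` attached to them respectively. -/
def whiskeredTriangle : SimpleGraph (Fin 6) :=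
  SimpleGraph.fromEdgeSet {s(0, 1), s(0, 2), s(1, 2), s(0, 3), s(1, 4), s(2, 5)}

/-- `G` is `W(K₃)`-free: no induced subgraph of `G` is isomorphic to the whiskered
triangle. -/
def WK3Free {V : Type} (G : SimpleGraph V) : Prop :=
  ¬ ∃ f : Fin 6 ↪ V, ∀ a b, whiskeredTriangle.Adj a b ↔ G.Adj (f a) (f b)

/-- The edge ideal of a graph `G`, in the polynomial ring `K[x_v : v ∈ V]`. -/
noncomputable def edgeIdeal {V : Type} (K : Type) [Field K] (G : SimpleGraph V) :
    Ideal (MvPolynomial V K) :=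
  Ideal.span {m | ∃ x y, G.Adj x y ∧ m = X x * X y}

/-- The depth of `S ⧸ J` with respect to the irrelevant maximal ideal `(x_v : v ∈ V)`:
the supremum of lengths of regular sequences on `S ⧸ J` consisting of elements of the
irrelevant maximal ideal.  The depth of the ideal `J` itself (as a module) is, by the
usual convention for proper ideals, `quotDepth K J + 1`. -/
noncomputable def quotDepth {V : Type} (K : Type) [Field K]
    (J : Ideal (MvPolynomial V K)) : ℕ :=
  sSup {n | ∃ rs : List (MvPolynomial V K), rs.length = n ∧
    (∀ r ∈ rs, r ∈ Ideal.span (Set.range (X (R := K) (σ := V)))) ∧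
    RingTheory.Sequence.IsRegular (MvPolynomial V K ⧸ J) rs}

/-- For the whiskered triangle `G = W(K₃)`, one has `depth_S I(G)² = 1` (with the
convention `depth_S I(G)² = depth_S(S/I(G)²) + 1`) and `α₂(G) = 3`; in particular
`depth_S I(G)² = α₂(G) - 2`, so the bound `depth I(G)² ≥ α₂(G) - 2` is sharp. -/
lemma coeff_zero_of_mem_pow {σ : Type} {R : Type} [CommRing R] :
    ∀ (n : ℕ) (q : MvPolynomial σ R),
      q ∈ Ideal.span (Set.range (X (R := R) (σ := σ))) ^ n →
      ∀ e : σ →₀ ℕ, (e.sum fun _ m => m) < n → coeff e q = 0 := by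
  classical
  intro n
  induction n with
  | zero => intro q _ e he; omega
  | succ n ih =>
    intro q hq e he
    rw [pow_succ] at hq
    induction hq using Submodule.mul_induction_on' with
    | mem_mul_mem p hp r hr =>
      rw [coeff_mul]
      apply Finset.sum_eq_zero
      rintro ⟨a, b⟩ hab
      rw [Finset.HasAntidiagonal.mem_antidiagonal] at hab
      have hsum : (a.sum fun _ m => m) + (b.sum fun _ m => m) = e.sum fun _ m => m := by
        rw [← hab]; exact (Finsupp.sum_add_index' (fun _ => rfl) (fun _ _ _ => rfl)).symm
      by_cases hca : (a.sum fun _ m => m) < n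
      · rw [ih p hp a hca, zero_mul]
      · have hb0 : b = 0 := by
          have : (b.sum fun _ m => m) = 0 := by omega
          ext x
          by_contra hx
          have hxs : x ∈ b.support := Finsupp.mem_support_iff.mpr hx
          exact hx (Finset.sum_eq_zero_iff.mp this x hxs)
        subst hb0
        have hc : coeff 0 r = 0 := by
          have hker : Ideal.span (Set.range (X (R := R) (σ := σ))) ≤
              RingHom.ker (constantCoeff (σ := σ) (R := R)) := by
            rw [Ideal.span_le]
            rintro _ ⟨i, rfl⟩
            simp [RingHom.mem_ker]
          simpa [constantCoeff_eq] using hker hr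
        rw [hc, mul_zero]
    | add x hx y hy ihx ihy => rw [coeff_add, ihx, ihy, add_zero]

lemma adjWT : ∀ a b : Fin 6, s(a,b) ∈ ({s((0:Fin 6), (1:Fin 6)), s(0, 2), s(1, 2), s(0, 3), s(1, 4), s(2, 5)} : Set (Sym2 (Fin 6))) → a ≠ b → whiskeredTriangle.Adj a b := by
  intro a b h hne
  rw [whiskeredTriangle, SimpleGraph.fromEdgeSet_adj]
  exact ⟨h, hne⟩

variable {K : Type} [Field K]

lemma edge_mem {a b : Fin 6} (h : whiskeredTriangle.Adj a b) :
    (X a * X b : MvPolynomial (Fin 6) K) ∈ edgeIdeal K whiskeredTriangle :=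
  Ideal.subset_span ⟨a, b, h, rfl⟩

lemma edgeProd_mem {a b c d : Fin 6} (h1 : whiskeredTriangle.Adj a b)
    (h2 : whiskeredTriangle.Adj c d) :
    (X a * X b) * (X c * X d) ∈ (edgeIdeal K whiskeredTriangle) ^ 2 := by
  rw [pow_two]
  exact Ideal.mul_mem_mul (edge_mem h1) (edge_mem h2)

lemma xf_mem : ∀ v : Fin 6,
    (X v * (X 0 * X 1 * X 2) : MvPolynomial (Fin 6) K) ∈ (edgeIdeal K whiskeredTriangle) ^ 2 := by
  have a01 : whiskeredTriangle.Adj 0 1 := adjWT 0 1 (by simp) (by decide)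
  have a02 : whiskeredTriangle.Adj 0 2 := adjWT 0 2 (by simp) (by decide)
  have a12 : whiskeredTriangle.Adj 1 2 := adjWT 1 2 (by simp) (by decide)
  have a30 : whiskeredTriangle.Adj 3 0 := (adjWT 0 3 (by simp) (by decide)).symm
  have a41 : whiskeredTriangle.Adj 4 1 := (adjWT 1 4 (by simp) (by decide)).symm
  have a52 : whiskeredTriangle.Adj 5 2 := (adjWT 2 5 (by simp) (by decide)).symm
  intro v
  fin_cases v <;> simp only [Fin.reduceFinMk, Fin.isValue]
  · have h : (X 0 * (X 0 * X 1 * X 2) : MvPolynomial (Fin 6) K)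
        = (X 0 * X 1) * (X 0 * X 2) := by ring
    rw [h]; exact edgeProd_mem a01 a02
  · have h : (X 1 * (X 0 * X 1 * X 2) : MvPolynomial (Fin 6) K)
        = (X 0 * X 1) * (X 1 * X 2) := by ring
    rw [h]; exact edgeProd_mem a01 a12
  · have h : (X 2 * (X 0 * X 1 * X 2) : MvPolynomial (Fin 6) K)
        = (X 0 * X 2) * (X 1 * X 2) := by ring
    rw [h]; exact edgeProd_mem a02 a12
  · have h : (X 3 * (X 0 * X 1 * X 2) : MvPolynomial (Fin 6) K)
        = (X 3 * X 0) * (X 1 * X 2) := by ring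
    rw [h]; exact edgeProd_mem a30 a12
  · have h : (X 4 * (X 0 * X 1 * X 2) : MvPolynomial (Fin 6) K)
        = (X 4 * X 1) * (X 0 * X 2) := by ring
    rw [h]; exact edgeProd_mem a41 a02
  · have h : (X 5 * (X 0 * X 1 * X 2) : MvPolynomial (Fin 6) K)
        = (X 5 * X 2) * (X 0 * X 1) := by ring
    rw [h]; exact edgeProd_mem a52 a01

lemma edgeIdeal_le_M2 :
    edgeIdeal K whiskeredTriangle ≤ (Ideal.span (Set.range (X (R := K) (σ := Fin 6)))) ^ 2 := by
  rw [edgeIdeal, Ideal.span_le]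
  rintro _ ⟨x, y, _, rfl⟩
  rw [pow_two]
  exact Ideal.mul_mem_mul (Ideal.subset_span ⟨x, rfl⟩) (Ideal.subset_span ⟨y, rfl⟩)

lemma sq_le_M4 :
    (edgeIdeal K whiskeredTriangle) ^ 2 ≤
      (Ideal.span (Set.range (X (R := K) (σ := Fin 6)))) ^ 4 := by
  have h1 : (edgeIdeal K whiskeredTriangle) ^ 2 ≤
      (Ideal.span (Set.range (X (R := K) (σ := Fin 6)))) ^ 2 *
      (Ideal.span (Set.range (X (R := K) (σ := Fin 6)))) ^ 2 := by
    rw [pow_two (edgeIdeal K whiskeredTriangle)]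
    exact Ideal.mul_mono (edgeIdeal_le_M2 (K := K)) (edgeIdeal_le_M2 (K := K))
  rwa [← pow_add] at h1

lemma f_not_mem : (X 0 * X 1 * X 2 : MvPolynomial (Fin 6) K) ∉ (edgeIdeal K whiskeredTriangle) ^ 2 := by
  intro h
  set d : Fin 6 →₀ ℕ := Finsupp.single 0 1 + Finsupp.single 1 1 + Finsupp.single 2 1 with hd
  have hsum : (d.sum fun _ m => m) = 3 := by
    rw [hd]
    rw [Finsupp.sum_add_index' (fun _ => rfl) (fun _ _ _ => rfl),
        Finsupp.sum_add_index' (fun _ => rfl) (fun _ _ _ => rfl),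
        Finsupp.sum_single_index rfl, Finsupp.sum_single_index rfl,
        Finsupp.sum_single_index rfl]
  have hz := coeff_zero_of_mem_pow 4 _ (sq_le_M4 h) d (by omega)
  have hf : coeff d (X 0 * X 1 * X 2 : MvPolynomial (Fin 6) K) = 1 := by
    have : (X 0 * X 1 * X 2 : MvPolynomial (Fin 6) K) = monomial d 1 := by
      rw [hd]
      rw [X, X, X, monomial_mul, monomial_mul]
      norm_num
    rw [this, coeff_monomial, if_pos rfl]
  rw [hz] at hf
  exact zero_ne_one hf

lemma one_not_mem : (1 : MvPolynomial (Fin 6) K) ∉ (edgeIdeal K whiskeredTriangle) ^ 2 := by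
  intro h
  have hz := coeff_zero_of_mem_pow 4 _ (sq_le_M4 h) 0 (by simp)
  rw [coeff_zero_one] at hz
  exact one_ne_zero hz

lemma gf_mem {g : MvPolynomial (Fin 6) K}
    (hg : g ∈ Ideal.span (Set.range (X (R := K) (σ := Fin 6)))) :
    g * (X 0 * X 1 * X 2) ∈ (edgeIdeal K whiskeredTriangle) ^ 2 := by
  induction hg using Submodule.span_induction with
  | mem x h => obtain ⟨v, rfl⟩ := h; exact xf_mem v
  | zero => rw [zero_mul]; exact Submodule.zero_mem _
  | add x y hx hy ihx ihy => rw [add_mul]; exact Ideal.add_mem _ ihx ihy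
  | smul a x hx ihx =>
    rw [smul_eq_mul, mul_assoc]
    exact Ideal.mul_mem_left _ a ihx


lemma cnaux (v : Fin 6) (s : Set (Fin 6))
    (h : ∀ x, (x = v ∨ whiskeredTriangle.Adj v x) ↔ x ∈ s) :
    closedNbhd whiskeredTriangle v = s := by
  ext x; rw [← h]; rfl

lemma cn0 : closedNbhd whiskeredTriangle 0 = {0,1,2,3} := by
  apply cnaux; intro x
  simp only [whiskeredTriangle, SimpleGraph.fromEdgeSet_adj]
  fin_cases x <;> simp
lemma cn1 : closedNbhd whiskeredTriangle 1 = {0,1,2,4} := by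
  apply cnaux; intro x
  simp only [whiskeredTriangle, SimpleGraph.fromEdgeSet_adj]
  fin_cases x <;> simp
lemma cn2 : closedNbhd whiskeredTriangle 2 = {0,1,2,5} := by
  apply cnaux; intro x
  simp only [whiskeredTriangle, SimpleGraph.fromEdgeSet_adj]
  fin_cases x <;> simp
lemma cn3 : closedNbhd whiskeredTriangle 3 = {3,0} := by
  apply cnaux; intro x
  simp only [whiskeredTriangle, SimpleGraph.fromEdgeSet_adj]
  fin_cases x <;> simp
lemma cn4 : closedNbhd whiskeredTriangle 4 = {4,1} := by
  apply cnaux; intro x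
  simp only [whiskeredTriangle, SimpleGraph.fromEdgeSet_adj]
  fin_cases x <;> simp
lemma cn5 : closedNbhd whiskeredTriangle 5 = {5,2} := by
  apply cnaux; intro x
  simp only [whiskeredTriangle, SimpleGraph.fromEdgeSet_adj]
  fin_cases x <;> simp


lemma notdisj (a b : Fin 6) (ha : a.val < 3) :
    ¬ Disjoint (closedNbhd whiskeredTriangle a) (closedNbhd whiskeredTriangle b) := by
  rw [Set.not_disjoint_iff]
  fin_cases a <;> fin_cases b <;>
    first
    | exact absurd ha (by decide)
    | (simp only [Fin.reduceFinMk, cn0,cn1,cn2,cn3,cn4,cn5, Set.mem_insert_iff,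
        Set.mem_singleton_iff]; decide)

lemma packing345 : IsStarPacking whiskeredTriangle {3,4,5} := by
  intro x hx y hy hxy
  simp only [Finset.coe_insert, Set.mem_insert_iff, Finset.coe_singleton,
    Set.mem_singleton_iff] at hx hy
  rcases hx with rfl|rfl|rfl <;> rcases hy with rfl|rfl|rfl <;>
    first
    | exact absurd rfl hxy
    | (simp only [cn3,cn4,cn5]; rw [Set.disjoint_left]; intro u hu; fin_cases u <;> simp_all)

lemma card_le (s : Finset (Fin 6)) (h : IsStarPacking whiskeredTriangle s) : s.card ≤ 3 := by
  by_contra hc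
  push_neg at hc
  have hex : ∃ a ∈ s, a ∉ ({3,4,5} : Finset (Fin 6)) := by
    by_contra h2
    push_neg at h2
    have := Finset.card_le_card (show s ⊆ {3,4,5} from fun a ha => h2 a ha)
    have h3 : ({3,4,5} : Finset (Fin 6)).card = 3 := by decide
    omega
  obtain ⟨a, has, ha3⟩ := hex
  have hlt : a.val < 3 := by fin_cases a <;> simp_all
  obtain ⟨b, hbs, hba⟩ := Finset.exists_mem_ne (s := s) (by omega) a
  exact notdisj a b hlt (h has hbs (Ne.symm hba))

theorem depth_sharp_whiskered_triangle (K : Type) [Field K] :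
    quotDepth K (edgeIdeal K whiskeredTriangle ^ 2) + 1 = 1 ∧
    starPackingNumber whiskeredTriangle = 3 ∧
    quotDepth K (edgeIdeal K whiskeredTriangle ^ 2) + 1 =
      starPackingNumber whiskeredTriangle - 2 := by
  have hpack : starPackingNumber whiskeredTriangle = 3 := by
    rw [starPackingNumber]
    have hmem3 : 3 ∈ {n | ∃ s : Finset (Fin 6),
        IsStarPacking whiskeredTriangle s ∧ s.card = n} :=
      ⟨{3,4,5}, packing345, by decide⟩
    have hub : ∀ n ∈ {n | ∃ s : Finset (Fin 6),
        IsStarPacking whiskeredTriangle s ∧ s.card = n}, n ≤ 3 := by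
      rintro n ⟨s, hs, rfl⟩
      exact card_le s hs
    exact le_antisymm (csSup_le ⟨3, hmem3⟩ hub) (le_csSup ⟨3, hub⟩ hmem3)
  set J := edgeIdeal K whiskeredTriangle ^ 2 with hJ
  have hJne : J ≠ ⊤ := by
    intro h
    exact one_not_mem (h ▸ Submodule.mem_top)
  have hdepth : quotDepth K J = 0 := by
    rw [quotDepth]
    apply le_antisymm
    · apply csSup_le
      · refine ⟨0, [], rfl, by simp, ?_⟩
        refine ⟨RingTheory.Sequence.IsWeaklyRegular.nil _ _, ?_⟩
        rw [Ideal.ofList_nil, Submodule.bot_smul]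
        intro h
        have h1 : (Ideal.Quotient.mk J 1) ∈ (⊥ : Submodule (MvPolynomial (Fin 6) K)
            (MvPolynomial (Fin 6) K ⧸ J)) := h ▸ Submodule.mem_top
        rw [Submodule.mem_bot] at h1
        exact one_not_mem (Ideal.Quotient.eq_zero_iff_mem.mp h1)
      · rintro n ⟨rs, hlen, hmem, hreg⟩
        rcases rs with _ | ⟨r, rest⟩
        · simp at hlen; omega
        · exfalso
          have hr : r ∈ Ideal.span (Set.range (X (R := K) (σ := Fin 6))) :=
            hmem r List.mem_cons_self
          have hw := hreg.toIsWeaklyRegular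
          rw [RingTheory.Sequence.isWeaklyRegular_cons_iff] at hw
          have hsr := hw.1
          have key : r • (Ideal.Quotient.mk J (X 0 * X 1 * X 2)) = r • (0 :
              MvPolynomial (Fin 6) K ⧸ J) := by
            rw [smul_zero]
            have h2 : r • (Ideal.Quotient.mk J (X 0 * X 1 * X 2)) =
                Ideal.Quotient.mk J (r * (X 0 * X 1 * X 2)) := rfl
            rw [h2, Ideal.Quotient.eq_zero_iff_mem]
            exact gf_mem hr
          have := hsr key
          rw [Ideal.Quotient.eq_zero_iff_mem] at this
          exact f_not_mem this
    · exact Nat.zero_le _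
  refine ⟨by rw [hdepth], hpack, by rw [hdepth, hpack]⟩
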